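/- For every probability distribution P_XY on 𝒳×𝒴, lim_{θ→0} 2[H(X|Y) − H↑_{1+θ}(X|Y)]/θ = V(X|Y). -/

import Mathlib

set_option linter.unusedSectionVars false
set_option linter.unusedVariables false
set_option maxHeartbeats 1000000

open Real Filter

/-- Marginal distribution on `𝒴`. -/
noncomputable def margY {𝒳 𝒴 : Type*} [Fintype 𝒳] (P : 𝒳 × 𝒴 → ℝ) (y : 𝒴) : ℝ :=
  ∑ x : 𝒳, P (x, y)

/-- Upper conditional Rényi entropy `H↑_{1+θ}(X|Y)`. -/
noncomputable def condRenyiUp {𝒳 𝒴 : Type*} [Fintype 𝒳] [Fintype 𝒴]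
    (P : 𝒳 × 𝒴 → ℝ) (θ : ℝ) : ℝ :=
  -((1 + θ) / θ) * Real.log (∑ y : 𝒴, (∑ x : 𝒳, P (x, y) ^ (1 + θ)) ^ (1 / (1 + θ)))

/-- Conditional entropy `H(X|Y)`. -/
noncomputable def condEnt {𝒳 𝒴 : Type*} [Fintype 𝒳] [Fintype 𝒴]
    (P : 𝒳 × 𝒴 → ℝ) : ℝ :=
  -∑ x : 𝒳, ∑ y : 𝒴,
    if 0 < P (x, y) then P (x, y) * Real.log (P (x, y) / margY P y) else 0

/-- Conditional varentropy `V(X|Y)`. -/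
noncomputable def condVarEnt {𝒳 𝒴 : Type*} [Fintype 𝒳] [Fintype 𝒴]
    (P : 𝒳 × 𝒴 → ℝ) : ℝ :=
  (∑ x : 𝒳, ∑ y : 𝒴,
    if 0 < P (x, y) then P (x, y) * (Real.log (P (x, y) / margY P y)) ^ 2 else 0)
  - (condEnt P) ^ 2

namespace CRaux

variable {𝒳 𝒴 : Type*} [Fintype 𝒳] [Fintype 𝒴]

noncomputable def T (P : 𝒳 × 𝒴 → ℝ) : Finset 𝒴 :=
  Finset.univ.filter (fun y => 0 < margY P y)

noncomputable def Sx (P : 𝒳 × 𝒴 → ℝ) (y : 𝒴) : Finset 𝒳 :=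
  Finset.univ.filter (fun x => 0 < P (x, y))

variable (P : 𝒳 × 𝒴 → ℝ)

lemma margY_nonneg (hP0 : ∀ p, 0 ≤ P p) (y : 𝒴) : 0 ≤ margY P y :=
  Finset.sum_nonneg fun x _ => hP0 _

lemma P_le_margY (hP0 : ∀ p, 0 ≤ P p) (x : 𝒳) (y : 𝒴) : P (x, y) ≤ margY P y :=
  Finset.single_le_sum (fun i _ => hP0 (i, y)) (Finset.mem_univ x)

lemma P_eq_zero_of_not_mem_T (hP0 : ∀ p, 0 ≤ P p) {y : 𝒴} (hy : y ∉ T P) (x : 𝒳) :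
    P (x, y) = 0 := by
  have h1 : margY P y = 0 := by
    by_contra h
    exact hy (Finset.mem_filter.2 ⟨Finset.mem_univ _,
      lt_of_le_of_ne (margY_nonneg P hP0 y) (Ne.symm h)⟩)
  have h2 := P_le_margY P hP0 x y
  have h3 := hP0 (x, y)
  linarith

lemma sum_Sx_P (hP0 : ∀ p, 0 ≤ P p) (y : 𝒴) : ∑ x ∈ Sx P y, P (x, y) = margY P y := by
  rw [margY]
  apply Finset.sum_subset (Finset.subset_univ _)
  intro x _ hx
  by_contra h
  exact hx (Finset.mem_filter.2 ⟨Finset.mem_univ _, lt_of_le_of_ne (hP0 _) (Ne.symm h)⟩)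

noncomputable def sY (P : 𝒳 × 𝒴 → ℝ) (y : 𝒴) : ℝ :=
  ∑ x ∈ Sx P y, P (x, y) * Real.log (P (x, y))

noncomputable def tY (P : 𝒳 × 𝒴 → ℝ) (y : 𝒴) : ℝ :=
  ∑ x ∈ Sx P y, P (x, y) * Real.log (P (x, y)) ^ 2

lemma inner_ent (hP0 : ∀ p, 0 ≤ P p) {y : 𝒴} (hy : y ∈ T P) :
    ∑ x : 𝒳, (if 0 < P (x, y) then P (x, y) * Real.log (P (x, y) / margY P y) else 0)
      = sY P y - margY P y * Real.log (margY P y) := by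
  have hm : 0 < margY P y := (Finset.mem_filter.1 hy).2
  rw [← Finset.sum_filter]
  have hfil : Finset.univ.filter (fun x => 0 < P (x, y)) = Sx P y := rfl
  rw [hfil]
  calc ∑ x ∈ Sx P y, P (x, y) * Real.log (P (x, y) / margY P y)
      = ∑ x ∈ Sx P y, (P (x, y) * Real.log (P (x, y))
          - P (x, y) * Real.log (margY P y)) := by
        apply Finset.sum_congr rfl
        intro x hx
        rw [Real.log_div (ne_of_gt (Finset.mem_filter.1 hx).2) (ne_of_gt hm)]
        ring
    _ = sY P y - (∑ x ∈ Sx P y, P (x, y)) * Real.log (margY P y) := by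
        rw [Finset.sum_sub_distrib, ← Finset.sum_mul, sY]
    _ = _ := by rw [sum_Sx_P P hP0]

lemma inner_var (hP0 : ∀ p, 0 ≤ P p) {y : 𝒴} (hy : y ∈ T P) :
    ∑ x : 𝒳, (if 0 < P (x, y) then P (x, y) * (Real.log (P (x, y) / margY P y)) ^ 2 else 0)
      = tY P y - 2 * sY P y * Real.log (margY P y)
        + margY P y * Real.log (margY P y) ^ 2 := by
  have hm : 0 < margY P y := (Finset.mem_filter.1 hy).2
  rw [← Finset.sum_filter]
  have hfil : Finset.univ.filter (fun x => 0 < P (x, y)) = Sx P y := rfl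
  rw [hfil]
  calc ∑ x ∈ Sx P y, P (x, y) * (Real.log (P (x, y) / margY P y)) ^ 2
      = ∑ x ∈ Sx P y, (P (x, y) * Real.log (P (x, y)) ^ 2
          - 2 * Real.log (margY P y) * (P (x, y) * Real.log (P (x, y)))
          + Real.log (margY P y) ^ 2 * P (x, y)) := by
        apply Finset.sum_congr rfl
        intro x hx
        rw [Real.log_div (ne_of_gt (Finset.mem_filter.1 hx).2) (ne_of_gt hm)]
        ring
    _ = tY P y - 2 * Real.log (margY P y) * (∑ x ∈ Sx P y, P (x, y) * Real.log (P (x, y)))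
          + Real.log (margY P y) ^ 2 * (∑ x ∈ Sx P y, P (x, y)) := by
        rw [Finset.sum_add_distrib, Finset.sum_sub_distrib, ← Finset.mul_sum, ← Finset.mul_sum, tY]
    _ = _ := by rw [sum_Sx_P P hP0, sY]; ring

lemma condEnt_eq (hP0 : ∀ p, 0 ≤ P p) :
    condEnt P = -∑ y ∈ T P, (sY P y - margY P y * Real.log (margY P y)) := by
  rw [condEnt]
  congr 1
  rw [Finset.sum_comm]
  rw [← Finset.sum_subset (Finset.subset_univ (T P)) ?h0]
  · exact Finset.sum_congr rfl fun y hy => inner_ent P hP0 hy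
  case h0 =>
    intro y _ hy
    apply Finset.sum_eq_zero
    intro x _
    rw [if_neg]
    rw [P_eq_zero_of_not_mem_T P hP0 hy x]
    exact lt_irrefl 0

lemma condVar_eq (hP0 : ∀ p, 0 ≤ P p) :
    condVarEnt P = (∑ y ∈ T P, (tY P y - 2 * sY P y * Real.log (margY P y)
        + margY P y * Real.log (margY P y) ^ 2)) - (condEnt P) ^ 2 := by
  rw [condVarEnt]
  congr 1
  rw [Finset.sum_comm]
  rw [← Finset.sum_subset (Finset.subset_univ (T P)) ?h0]
  · exact Finset.sum_congr rfl fun y hy => inner_var P hP0 hy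
  case h0 =>
    intro y _ hy
    apply Finset.sum_eq_zero
    intro x _
    rw [if_neg]
    rw [P_eq_zero_of_not_mem_T P hP0 hy x]
    exact lt_irrefl 0

noncomputable def A (P : 𝒳 × 𝒴 → ℝ) (θ : ℝ) (y : 𝒴) : ℝ :=
  ∑ x ∈ Sx P y, Real.exp (Real.log (P (x, y)) * (1 + θ))

noncomputable def A1 (P : 𝒳 × 𝒴 → ℝ) (θ : ℝ) (y : 𝒴) : ℝ :=
  ∑ x ∈ Sx P y, Real.exp (Real.log (P (x, y)) * (1 + θ)) * Real.log (P (x, y))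

noncomputable def A2 (P : 𝒳 × 𝒴 → ℝ) (θ : ℝ) (y : 𝒴) : ℝ :=
  ∑ x ∈ Sx P y, Real.exp (Real.log (P (x, y)) * (1 + θ)) * Real.log (P (x, y)) ^ 2

noncomputable def φ (P : 𝒳 × 𝒴 → ℝ) (θ : ℝ) (y : 𝒴) : ℝ :=
  (1 + θ)⁻¹ * Real.log (A P θ y)

noncomputable def φ1 (P : 𝒳 × 𝒴 → ℝ) (θ : ℝ) (y : 𝒴) : ℝ :=
  (-1 / (1 + θ) ^ 2) * Real.log (A P θ y) + (1 + θ)⁻¹ * (A1 P θ y / A P θ y)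

noncomputable def B (P : 𝒳 × 𝒴 → ℝ) (θ : ℝ) : ℝ :=
  ∑ y ∈ T P, Real.exp (φ P θ y)

noncomputable def B1 (P : 𝒳 × 𝒴 → ℝ) (θ : ℝ) : ℝ :=
  ∑ y ∈ T P, Real.exp (φ P θ y) * φ1 P θ y

noncomputable def g (P : 𝒳 × 𝒴 → ℝ) (θ : ℝ) : ℝ := Real.log (B P θ)

noncomputable def g1 (P : 𝒳 × 𝒴 → ℝ) (θ : ℝ) : ℝ := B1 P θ / B P θ


lemma Sx_nonempty (hP0 : ∀ p, 0 ≤ P p) {y : 𝒴} (hy : y ∈ T P) : (Sx P y).Nonempty := by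
  have hm : 0 < margY P y := (Finset.mem_filter.1 hy).2
  by_contra h
  rw [Finset.not_nonempty_iff_eq_empty] at h
  have : margY P y = 0 := by
    apply Finset.sum_eq_zero
    intro x _
    by_contra hx
    have : x ∈ Sx P y := Finset.mem_filter.2 ⟨Finset.mem_univ _,
      lt_of_le_of_ne (hP0 _) (Ne.symm hx)⟩
    simp [h] at this
  linarith

lemma A_pos (hP0 : ∀ p, 0 ≤ P p) (θ : ℝ) {y : 𝒴} (hy : y ∈ T P) : 0 < A P θ y :=
  Finset.sum_pos (fun _ _ => Real.exp_pos _) (Sx_nonempty P hP0 hy)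

lemma A_zero (hP0 : ∀ p, 0 ≤ P p) (y : 𝒴) : A P 0 y = margY P y := by
  rw [A, ← sum_Sx_P P hP0]
  apply Finset.sum_congr rfl
  intro x hx
  rw [mul_comm, add_zero, one_mul, Real.exp_log (Finset.mem_filter.1 hx).2]

lemma A1_zero (y : 𝒴) : A1 P 0 y = ∑ x ∈ Sx P y, P (x, y) * Real.log (P (x, y)) := by
  rw [A1]
  apply Finset.sum_congr rfl
  intro x hx
  rw [add_zero, mul_one, Real.exp_log (Finset.mem_filter.1 hx).2]

lemma A2_zero (y : 𝒴) : A2 P 0 y = ∑ x ∈ Sx P y, P (x, y) * Real.log (P (x, y)) ^ 2 := by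
  rw [A2]
  apply Finset.sum_congr rfl
  intro x hx
  rw [add_zero, mul_one, Real.exp_log (Finset.mem_filter.1 hx).2]

lemma sum_margY (hP1 : ∑ p : 𝒳 × 𝒴, P p = 1) : ∑ y : 𝒴, margY P y = 1 := by
  rw [← hP1, Fintype.sum_prod_type]
  exact Finset.sum_comm

lemma sum_T_margY (hP0 : ∀ p, 0 ≤ P p) (hP1 : ∑ p : 𝒳 × 𝒴, P p = 1) : ∑ y ∈ T P, margY P y = 1 := by
  rw [← sum_margY P hP1]
  apply Finset.sum_subset (Finset.subset_univ _)
  intro y _ hy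
  have := margY_nonneg P hP0 y
  by_contra h
  exact hy (Finset.mem_filter.2 ⟨Finset.mem_univ _, lt_of_le_of_ne this (Ne.symm h)⟩)

lemma T_nonempty (hP0 : ∀ p, 0 ≤ P p) (hP1 : ∑ p : 𝒳 × 𝒴, P p = 1) : (T P).Nonempty := by
  by_contra h
  rw [Finset.not_nonempty_iff_eq_empty] at h
  have := sum_T_margY P hP0 hP1
  simp [h] at this

lemma B_pos (hP0 : ∀ p, 0 ≤ P p) (hP1 : ∑ p : 𝒳 × 𝒴, P p = 1) (θ : ℝ) : 0 < B P θ :=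
  Finset.sum_pos (fun _ _ => Real.exp_pos _) (T_nonempty P hP0 hP1)


noncomputable def Vterm (P : 𝒳 × 𝒴 → ℝ) (y : 𝒴) : ℝ :=
  tY P y - 2 * sY P y * Real.log (margY P y) + margY P y * Real.log (margY P y) ^ 2
    - 2 * (sY P y - margY P y * Real.log (margY P y))

section Deriv

variable (P : 𝒳 × 𝒴 → ℝ)

lemma hasDerivAt_A (θ : ℝ) (y : 𝒴) : HasDerivAt (fun t => A P t y) (A1 P θ y) θ := by
  apply HasDerivAt.fun_sum
  intro x _
  have h1 : HasDerivAt (fun t : ℝ => Real.log (P (x, y)) * (1 + t)) (Real.log (P (x, y))) θ := by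
    simpa using ((hasDerivAt_id θ).const_add 1).const_mul (Real.log (P (x, y)))
  exact h1.exp

lemma hasDerivAt_A1 (θ : ℝ) (y : 𝒴) : HasDerivAt (fun t => A1 P t y) (A2 P θ y) θ := by
  apply HasDerivAt.fun_sum
  intro x _
  have h1 : HasDerivAt (fun t : ℝ => Real.log (P (x, y)) * (1 + t)) (Real.log (P (x, y))) θ := by
    simpa using ((hasDerivAt_id θ).const_add 1).const_mul (Real.log (P (x, y)))
  have := h1.exp.mul_const (Real.log (P (x, y)))
  simpa [sq, mul_assoc] using this

lemma hasDerivAt_φ (hP0 : ∀ p, 0 ≤ P p) {θ : ℝ} (hθ : (1 : ℝ) + θ ≠ 0) {y : 𝒴}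
    (hy : y ∈ T P) : HasDerivAt (fun t => φ P t y) (φ1 P θ y) θ := by
  have hA := hasDerivAt_A P θ y
  have hApos := A_pos P hP0 θ hy
  have hinv : HasDerivAt (fun t : ℝ => (1 + t)⁻¹) (-1 / (1 + θ) ^ 2) θ := by
    simpa using ((hasDerivAt_id θ).const_add 1).fun_inv hθ
  have hlog := hA.log (ne_of_gt hApos)
  exact hinv.mul hlog

lemma hasDerivAt_B (hP0 : ∀ p, 0 ≤ P p) {θ : ℝ} (hθ : (1 : ℝ) + θ ≠ 0) :
    HasDerivAt (B P) (B1 P θ) θ := by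
  apply HasDerivAt.fun_sum
  intro y hy
  exact (hasDerivAt_φ P hP0 hθ hy).exp

lemma hasDerivAt_g (hP0 : ∀ p, 0 ≤ P p) (hP1 : ∑ p : 𝒳 × 𝒴, P p = 1) {θ : ℝ}
    (hθ : (1 : ℝ) + θ ≠ 0) : HasDerivAt (g P) (g1 P θ) θ :=
  (hasDerivAt_B P hP0 hθ).log (ne_of_gt (B_pos P hP0 hP1 θ))

lemma φ_zero (hP0 : ∀ p, 0 ≤ P p) (y : 𝒴) : φ P 0 y = Real.log (margY P y) := by
  rw [φ, A_zero P hP0]; norm_num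

lemma φ1_zero (hP0 : ∀ p, 0 ≤ P p) (y : 𝒴) :
    φ1 P 0 y = -Real.log (margY P y) + sY P y / margY P y := by
  rw [φ1, A_zero P hP0, A1_zero P, ← sY]
  norm_num

lemma hasDerivAt_φ1_at0 (hP0 : ∀ p, 0 ≤ P p) {y : 𝒴} (hy : y ∈ T P) :
    HasDerivAt (fun t => φ1 P t y)
      (2 * Real.log (margY P y) - 2 * (sY P y / margY P y)
        + (tY P y / margY P y - (sY P y / margY P y) ^ 2)) 0 := by
  have hm : 0 < margY P y := (Finset.mem_filter.1 hy).2
  have hA := hasDerivAt_A P 0 y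
  have hA1 := hasDerivAt_A1 P 0 y
  have hApos : (0:ℝ) < A P 0 y := A_pos P hP0 0 hy
  have hAne : A P 0 y ≠ 0 := ne_of_gt hApos
  have hsq : HasDerivAt (fun t : ℝ => (1 + t) ^ 2) (2 * (1 + 0)) 0 := by
    have := ((hasDerivAt_id (0:ℝ)).const_add 1).fun_pow 2
    simpa using this
  have hc1 : HasDerivAt (fun t : ℝ => -1 / (1 + t) ^ 2)
      ((0 * (1 + 0) ^ 2 - (-1) * (2 * (1 + 0))) / ((1 + 0) ^ 2) ^ 2) 0 :=
    (hasDerivAt_const 0 (-1 : ℝ)).div hsq (by norm_num)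
  have hlogA := hA.log hAne
  have hinv : HasDerivAt (fun t : ℝ => (1 + t)⁻¹) (-1 / (1 + 0) ^ 2) 0 := by
    simpa using ((hasDerivAt_id (0:ℝ)).const_add 1).fun_inv (by norm_num)
  have hquot : HasDerivAt (fun t => A1 P t y / A P t y)
      ((A2 P 0 y * A P 0 y - A1 P 0 y * A1 P 0 y) / (A P 0 y) ^ 2) 0 := hA1.div hA hAne
  have : HasDerivAt (fun t => φ1 P t y) (_ : ℝ) (0 : ℝ) := (hc1.fun_mul hlogA).fun_add (hinv.fun_mul hquot)
  convert this using 1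
  rw [A_zero P hP0, A1_zero P, A2_zero P, ← sY, ← tY]
  have hmne : margY P y ≠ 0 := ne_of_gt hm
  field_simp
  ring

lemma exp_φ_zero (hP0 : ∀ p, 0 ≤ P p) {y : 𝒴} (hy : y ∈ T P) :
    Real.exp (φ P 0 y) = margY P y := by
  rw [φ_zero P hP0, Real.exp_log (Finset.mem_filter.1 hy).2]

lemma hasDerivAt_B1_at0 (hP0 : ∀ p, 0 ≤ P p) :
    HasDerivAt (B1 P) (∑ y ∈ T P, Vterm P y) 0 := by
  apply HasDerivAt.fun_sum
  intro y hy
  have hm : 0 < margY P y := (Finset.mem_filter.1 hy).2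
  show HasDerivAt (fun t => Real.exp (φ P t y) * φ1 P t y) _ 0
  have h1 : HasDerivAt (fun t => Real.exp (φ P t y) * φ1 P t y) (_ : ℝ) (0 : ℝ) := ((hasDerivAt_φ P hP0 (by norm_num) hy).exp).fun_mul (hasDerivAt_φ1_at0 P hP0 hy)
  convert h1 using 1
  rw [exp_φ_zero P hP0 hy, φ1_zero P hP0, Vterm]
  have hmne : margY P y ≠ 0 := ne_of_gt hm
  field_simp
  ring

lemma B_zero (hP0 : ∀ p, 0 ≤ P p) (hP1 : ∑ p : 𝒳 × 𝒴, P p = 1) : B P 0 = 1 := by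
  rw [B, ← sum_T_margY P hP0 hP1]
  exact Finset.sum_congr rfl fun y hy => exp_φ_zero P hP0 hy

lemma B1_zero (hP0 : ∀ p, 0 ≤ P p) :
    B1 P 0 = ∑ y ∈ T P, (sY P y - margY P y * Real.log (margY P y)) := by
  rw [B1]
  apply Finset.sum_congr rfl
  intro y hy
  have hm : 0 < margY P y := (Finset.mem_filter.1 hy).2
  rw [exp_φ_zero P hP0 hy, φ1_zero P hP0]
  field_simp
  ring

lemma hasDerivAt_g1_at0 (hP0 : ∀ p, 0 ≤ P p) (hP1 : ∑ p : 𝒳 × 𝒴, P p = 1) :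
    HasDerivAt (g1 P) (∑ y ∈ T P, Vterm P y - (B1 P 0) ^ 2) 0 := by
  have h : HasDerivAt (g1 P) (_ : ℝ) (0 : ℝ) := (hasDerivAt_B1_at0 P hP0).fun_div (hasDerivAt_B P hP0 (by norm_num))
    (ne_of_gt (B_pos P hP0 hP1 0))
  convert h using 1
  rw [B_zero P hP0 hP1]
  ring

end Deriv


noncomputable def hh (P : 𝒳 × 𝒴 → ℝ) (H θ : ℝ) : ℝ := (1 + θ) * g P θ + H * θ

noncomputable def h1 (P : 𝒳 × 𝒴 → ℝ) (H θ : ℝ) : ℝ := g P θ + (1 + θ) * g1 P θ + H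

section Deriv2

variable (P : 𝒳 × 𝒴 → ℝ)

lemma g_zero (hP0 : ∀ p, 0 ≤ P p) (hP1 : ∑ p : 𝒳 × 𝒴, P p = 1) : g P 0 = 0 := by
  rw [g, B_zero P hP0 hP1, Real.log_one]

lemma g1_zero (hP0 : ∀ p, 0 ≤ P p) (hP1 : ∑ p : 𝒳 × 𝒴, P p = 1) : g1 P 0 = B1 P 0 := by
  rw [g1, B_zero P hP0 hP1, div_one]

lemma hasDerivAt_hh (hP0 : ∀ p, 0 ≤ P p) (hP1 : ∑ p : 𝒳 × 𝒴, P p = 1) (H : ℝ) {θ : ℝ}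
    (hθ : (1 : ℝ) + θ ≠ 0) : HasDerivAt (hh P H) (h1 P H θ) θ := by
  have h1g := hasDerivAt_g P hP0 hP1 hθ
  have hlin : HasDerivAt (fun t : ℝ => (1 : ℝ) + t) 1 θ := by
    simpa using (hasDerivAt_id θ).const_add 1
  have : HasDerivAt (hh P H) (_ : ℝ) θ := (hlin.fun_mul h1g).fun_add ((hasDerivAt_id θ).const_mul H)
  convert this using 1
  rw [h1]
  ring

lemma hasDerivAt_h1_at0 (hP0 : ∀ p, 0 ≤ P p) (hP1 : ∑ p : 𝒳 × 𝒴, P p = 1) (H : ℝ) :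
    HasDerivAt (h1 P H)
      (2 * g1 P 0 + (∑ y ∈ T P, Vterm P y - (B1 P 0) ^ 2)) 0 := by
  have hg0 := hasDerivAt_g P hP0 hP1 (by norm_num : (1:ℝ) + 0 ≠ 0)
  have hg1' := hasDerivAt_g1_at0 P hP0 hP1
  have hlin : HasDerivAt (fun t : ℝ => (1 : ℝ) + t) 1 0 := by
    simpa using (hasDerivAt_id (0:ℝ)).const_add 1
  have : HasDerivAt (h1 P H) (_ : ℝ) (0 : ℝ) := (hg0.fun_add (hlin.fun_mul hg1')).add_const H
  convert this using 1
  ring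

lemma renyi_eq (hP0 : ∀ p, 0 ≤ P p) {θ : ℝ} (hθ : -1 < θ) (hθ0 : θ ≠ 0) :
    condRenyiUp P θ = -((1 + θ) / θ) * g P θ := by
  classical
  have h1θ : (0:ℝ) < 1 + θ := by linarith
  rw [condRenyiUp, g, B]
  congr 2
  have hy : ∀ y : 𝒴, (∑ x : 𝒳, P (x, y) ^ (1 + θ)) ^ (1 / (1 + θ))
      = if y ∈ T P then Real.exp (φ P θ y) else 0 := by
    intro y
    have hinner : ∑ x : 𝒳, P (x, y) ^ (1 + θ) = A P θ y := by
      rw [A, ← Finset.sum_subset (Finset.subset_univ (Sx P y)) ?h0]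
      · exact Finset.sum_congr rfl fun x hx =>
          Real.rpow_def_of_pos (Finset.mem_filter.1 hx).2 _
      case h0 =>
        intro x _ hx
        have hx0 : P (x, y) = 0 := by
          by_contra h
          exact hx (Finset.mem_filter.2 ⟨Finset.mem_univ _,
            lt_of_le_of_ne (hP0 _) (Ne.symm h)⟩)
        rw [hx0, Real.zero_rpow (ne_of_gt h1θ)]
    rw [hinner]
    by_cases hyT : y ∈ T P
    · rw [if_pos hyT]
      have hApos : 0 < A P θ y := A_pos P hP0 θ hyT
      rw [Real.rpow_def_of_pos hApos, φ]
      congr 1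
      rw [one_div]
      ring
    · rw [if_neg hyT]
      have hA0 : A P θ y = 0 := by
        apply Finset.sum_eq_zero
        intro x hx
        have := P_eq_zero_of_not_mem_T P hP0 hyT x
        have := (Finset.mem_filter.1 hx).2
        linarith
      rw [hA0, Real.zero_rpow]
      exact one_div_ne_zero (ne_of_gt h1θ)
  calc ∑ y : 𝒴, (∑ x : 𝒳, P (x, y) ^ (1 + θ)) ^ (1 / (1 + θ))
      = ∑ y : 𝒴, if y ∈ T P then Real.exp (φ P θ y) else 0 :=
        Finset.sum_congr rfl fun y _ => hy y
    _ = ∑ y ∈ T P, Real.exp (φ P θ y) := by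
        rw [Finset.sum_ite_mem, Finset.univ_inter]

end Deriv2

end CRaux

theorem upper_condRenyi_second_order {𝒳 𝒴 : Type*} [Fintype 𝒳] [Fintype 𝒴]
    (P : 𝒳 × 𝒴 → ℝ) (hP0 : ∀ p, 0 ≤ P p) (hP1 : ∑ p : 𝒳 × 𝒴, P p = 1) :
    Tendsto (fun θ : ℝ => 2 * (condEnt P - condRenyiUp P θ) / θ)
      (nhdsWithin 0 (Set.Ioo (-1 : ℝ) 0 ∪ Set.Ioi 0)) (nhds (condVarEnt P)) := by
  classical
  set H := condEnt P with hH
  set V := condVarEnt P with hV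
  have hB1z : CRaux.B1 P 0 = -H := by
    rw [CRaux.B1_zero P hP0, hH, CRaux.condEnt_eq P hP0, neg_neg]
  have hg1z : CRaux.g1 P 0 = -H := by rw [CRaux.g1_zero P hP0 hP1, hB1z]
  -- sum of Vterm
  have hsumV : ∑ y ∈ CRaux.T P, CRaux.Vterm P y
      = (∑ y ∈ CRaux.T P, (CRaux.tY P y - 2 * CRaux.sY P y * Real.log (margY P y)
          + margY P y * Real.log (margY P y) ^ 2))
        - 2 * ∑ y ∈ CRaux.T P, (CRaux.sY P y - margY P y * Real.log (margY P y)) := by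
    rw [Finset.mul_sum, ← Finset.sum_sub_distrib]
    exact Finset.sum_congr rfl fun y _ => by rw [CRaux.Vterm]
  have hEnt : ∑ y ∈ CRaux.T P, (CRaux.sY P y - margY P y * Real.log (margY P y)) = -H := by
    rw [hH, CRaux.condEnt_eq P hP0, neg_neg]
  have hVar := CRaux.condVar_eq P hP0
  have hval : 2 * CRaux.g1 P 0 + (∑ y ∈ CRaux.T P, CRaux.Vterm P y - (CRaux.B1 P 0) ^ 2) = V := by
    rw [hg1z, hB1z, hsumV, hEnt, hV, hVar, ← hH]
    ring
  have hh1z : CRaux.h1 P H 0 = 0 := by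
    rw [CRaux.h1, CRaux.g_zero P hP0 hP1, hg1z]
    ring
  -- derivative facts
  have hd1 : HasDerivAt (CRaux.h1 P H) V 0 := by
    rw [← hval]; exact CRaux.hasDerivAt_h1_at0 P hP0 hP1 H
  have hIoi : Set.Ioi (-1 : ℝ) ∈ nhds (0 : ℝ) := Ioi_mem_nhds (by norm_num)
  have hney : ∀ᶠ θ in nhdsWithin (0:ℝ) {(0:ℝ)}ᶜ, (1:ℝ) + θ ≠ 0 := by
    filter_upwards [nhdsWithin_le_nhds hIoi] with θ hθ
    have : (-1:ℝ) < θ := hθ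
    linarith
  have hff' : ∀ᶠ θ in nhdsWithin (0:ℝ) {(0:ℝ)}ᶜ,
      HasDerivAt (CRaux.hh P H) (CRaux.h1 P H θ) θ :=
    hney.mono fun θ h => CRaux.hasDerivAt_hh P hP0 hP1 H h
  have hgg' : ∀ θ : ℝ, HasDerivAt (fun t : ℝ => t ^ 2) (2 * θ) θ := by
    intro θ
    simpa using hasDerivAt_pow 2 θ
  have hg'ne : ∀ᶠ θ in nhdsWithin (0:ℝ) {(0:ℝ)}ᶜ, 2 * θ ≠ 0 := by
    filter_upwards [self_mem_nhdsWithin] with θ hθ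
    have : θ ≠ 0 := hθ
    intro h
    apply this
    linarith
  have hh0 : CRaux.hh P H 0 = 0 := by
    rw [CRaux.hh, CRaux.g_zero P hP0 hP1]
    ring
  have hfa : Tendsto (CRaux.hh P H) (nhdsWithin (0:ℝ) {(0:ℝ)}ᶜ) (nhds 0) := by
    have hc := (CRaux.hasDerivAt_hh P hP0 hP1 H (by norm_num : (1:ℝ) + 0 ≠ 0)).continuousAt
    have := hc.tendsto
    rw [hh0] at this
    exact this.mono_left nhdsWithin_le_nhds
  have hga : Tendsto (fun t : ℝ => t ^ 2) (nhdsWithin (0:ℝ) {(0:ℝ)}ᶜ) (nhds 0) := by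
    have : Tendsto (fun t : ℝ => t ^ 2) (nhds 0) (nhds ((0:ℝ) ^ 2)) :=
      (continuous_pow 2).continuousAt
    simpa using this.mono_left nhdsWithin_le_nhds
  have hdiv : Tendsto (fun θ => CRaux.h1 P H θ / (2 * θ))
      (nhdsWithin (0:ℝ) {(0:ℝ)}ᶜ) (nhds (V / 2)) := by
    have hslope := hasDerivAt_iff_tendsto_slope.1 hd1
    have h2 := hslope.div_const 2
    apply h2.congr'
    filter_upwards [self_mem_nhdsWithin] with θ hθ
    have hθ0 : θ ≠ 0 := hθ
    rw [slope_def_field, hh1z, sub_zero, sub_zero, div_div, mul_comm θ 2]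
  have hmain : Tendsto (fun θ => CRaux.hh P H θ / θ ^ 2)
      (nhdsWithin (0:ℝ) {(0:ℝ)}ᶜ) (nhds (V / 2)) :=
    HasDerivAt.lhopital_zero_nhdsNE hff' (Eventually.of_forall fun θ => hgg' θ)
      hg'ne hfa hga hdiv
  have hmain2 : Tendsto (fun θ => 2 * (CRaux.hh P H θ / θ ^ 2))
      (nhdsWithin (0:ℝ) {(0:ℝ)}ᶜ) (nhds V) := by
    have := hmain.const_mul 2
    convert this using 2
    ring
  -- restrict the filter
  have hsub : (Set.Ioo (-1 : ℝ) 0 ∪ Set.Ioi 0) ⊆ {(0:ℝ)}ᶜ := by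
    intro θ hθ
    rcases hθ with h | h
    · exact ne_of_lt h.2
    · exact ne_of_gt h
  have hle := nhdsWithin_mono (0:ℝ) hsub
  have hmain3 := hmain2.mono_left hle
  apply hmain3.congr'
  filter_upwards [self_mem_nhdsWithin] with θ hθ
  have hθ1 : -1 < θ := by
    rcases hθ with h | h
    · exact h.1
    · have : (0:ℝ) < θ := h; linarith
  have hθ0 : θ ≠ 0 := by
    rcases hθ with h | h
    · exact ne_of_lt h.2
    · exact ne_of_gt h
  rw [CRaux.renyi_eq P hP0 hθ1 hθ0, CRaux.hh]
  field_simp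
  ring
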